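/- Let J be a finite set of items with integer widths w_j ≥ 1 and integer heights h_j ≥ 1, and let I be a finite set of strips with integer widths W_i ≥ 1 and per-unit-area costs C_i > 0, such that every item fits on at least one strip (w_j ≤ max_i W_i). Then the infimum of Σ_i C_i·W_i·H_i over all fractional solutions is at most the cost Σ_i C_i·W_i·H_i of every feasible GMSPP packing. In other words, the LP relaxation of the column-load model (P|cont|C_max) provides a valid lower bound z*_{LP-PC} ≤ z* on the optimal GMSPP value. -/

import Mathlib

open scoped Classical

/-- A feasible GMSPP packing of the finite set `J` of items into the strips
`I` with strip heights `Hs i ≥ 0`: an assignment `σ` and coordinates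
`x j, y j ≥ 0` with `x j + w j ≤ Wd (σ j)` and `y j + h j ≤ Hs (σ j)`, such
that the open rectangles of distinct items on a common strip are disjoint. -/
def IsGMSPPPacking {ι κ : Type*} (J : Finset ι) (I : Finset κ)
    (w h : ι → ℝ) (Wd Hs : κ → ℝ) (σ : ι → κ) (x y : ι → ℝ) : Prop :=
  (∀ i ∈ I, 0 ≤ Hs i) ∧
  (∀ j ∈ J, σ j ∈ I) ∧
  (∀ j ∈ J, 0 ≤ x j ∧ 0 ≤ y j ∧
    x j + w j ≤ Wd (σ j) ∧ y j + h j ≤ Hs (σ j)) ∧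
  (∀ j ∈ J, ∀ k ∈ J, j ≠ k → σ j = σ k →
    Disjoint (Set.Ioo (x j) (x j + w j) ×ˢ Set.Ioo (y j) (y j + h j))
             (Set.Ioo (x k) (x k + w k) ×ˢ Set.Ioo (y k) (y k + h k)))

/-- The set of *normal positions* (as natural numbers) of item `j` on a strip
of width `Wi`, for items `J` with integer widths `w`: positions
`p = ∑_{k ∈ S} w k` for some `S ⊆ J \ {j}` with `p + w j ≤ Wi`. -/
def NormalPosNat {ι : Type*} [DecidableEq ι] (J : Finset ι) (w : ι → ℕ)
    (Wi : ℕ) (j : ι) : Set ℕ :=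
  { p | (∃ S ⊆ J.erase j, p = ∑ k ∈ S, w k) ∧ p + w j ≤ Wi }

/-- A *fractional solution* of the column-load model (P|cont|C_max):
strip heights `Hs i ≥ 0` and values `xv i j p ∈ [0,1]`, supported on feasible
strips and normal positions, satisfying the assignment constraints and the
column-load constraints. -/
def IsFractionalSolution {ι κ : Type*} [DecidableEq ι]
    (J : Finset ι) (I : Finset κ) (w h : ι → ℕ) (Wd : κ → ℕ)
    (Hs : κ → ℝ) (xv : κ → ι → ℕ → ℝ) : Prop :=
  (∀ i ∈ I, 0 ≤ Hs i) ∧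
  (∀ i ∈ I, ∀ j ∈ J, ∀ p : ℕ, 0 ≤ xv i j p ∧ xv i j p ≤ 1) ∧
  (∀ i ∈ I, ∀ j ∈ J, ∀ p : ℕ, xv i j p ≠ 0 →
    w j ≤ Wd i ∧ p ∈ NormalPosNat J w (Wd i) j) ∧
  (∀ j ∈ J, ∑ i ∈ I, ∑ p ∈ Finset.range (Wd i), xv i j p = 1) ∧
  (∀ i ∈ I, ∀ q < Wd i,
    ∑ j ∈ J, ∑ p ∈ (Finset.range (Wd i)).filter
        (fun p => p ∈ NormalPosNat J w (Wd i) j ∧ p ≤ q ∧ q < p + w j),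
      (h j : ℝ) * xv i j p ≤ Hs i)


section Aux

open Set MeasureTheory

lemma sum_length_le_of_disjoint {ι : Type*} (T : Finset ι) (a b : ι → ℝ) (H : ℝ)
    (hH : 0 ≤ H) (hab : ∀ j ∈ T, a j ≤ b j) (ha : ∀ j ∈ T, 0 ≤ a j)
    (hb : ∀ j ∈ T, b j ≤ H)
    (hd : (T : Set ι).PairwiseDisjoint (fun j => Set.Ioo (a j) (b j))) :
    ∑ j ∈ T, (b j - a j) ≤ H := by
  rw [← ENNReal.ofReal_le_ofReal_iff hH]
  calc ENNReal.ofReal (∑ j ∈ T, (b j - a j))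
      = ∑ j ∈ T, ENNReal.ofReal (b j - a j) :=
        ENNReal.ofReal_sum_of_nonneg (fun j hj => sub_nonneg.2 (hab j hj))
    _ = ∑ j ∈ T, volume (Set.Ioo (a j) (b j)) := by simp [Real.volume_Ioo]
    _ = volume (⋃ j ∈ T, Set.Ioo (a j) (b j)) :=
        (measure_biUnion_finset hd (fun j _ => measurableSet_Ioo)).symm
    _ ≤ volume (Set.Icc 0 H) := by
        apply measure_mono
        intro t ht
        simp only [Set.mem_iUnion] at ht
        obtain ⟨j, hj, htj⟩ := ht
        exact ⟨le_trans (ha j hj) htj.1.le, le_trans htj.2.le (hb j hj)⟩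
    _ = ENNReal.ofReal H := by rw [Real.volume_Icc, sub_zero]

lemma Ioo_disjoint_cases {a b c d : ℝ} (hab : a < b) (hcd : c < d)
    (h : Disjoint (Set.Ioo a b) (Set.Ioo c d)) : b ≤ c ∨ d ≤ a := by
  by_contra hcon
  push_neg at hcon
  obtain ⟨h1, h2⟩ := hcon
  have hlt : max a c < min b d := by
    rw [max_lt_iff, lt_min_iff, lt_min_iff]
    exact ⟨⟨hab, h2⟩, ⟨h1, hcd⟩⟩
  have ht : (max a c + min b d) / 2 ∈ Set.Ioo (max a c) (min b d) :=
    ⟨by linarith, by linarith⟩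
  have ht1 : (max a c + min b d) / 2 ∈ Set.Ioo a b :=
    ⟨lt_of_le_of_lt (le_max_left _ _) ht.1, lt_of_lt_of_le ht.2 (min_le_left _ _)⟩
  have ht2 : (max a c + min b d) / 2 ∈ Set.Ioo c d :=
    ⟨lt_of_le_of_lt (le_max_right _ _) ht.1, lt_of_lt_of_le ht.2 (min_le_right _ _)⟩
  exact Set.disjoint_left.mp h ht1 ht2

lemma disjoint_of_prod_disjoint {A B C D : Set ℝ} (hBD : (B ∩ D).Nonempty)
    (h : Disjoint (A ×ˢ B) (C ×ˢ D)) : Disjoint A C := by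
  obtain ⟨t, htB, htD⟩ := hBD
  rw [Set.disjoint_left]
  intro s hsA hsC
  exact Set.disjoint_left.mp h (Set.mk_mem_prod hsA htB) (Set.mk_mem_prod hsC htD)

noncomputable def cpPos {ι κ : Type*} (J : Finset ι) (w : ι → ℕ) (σ : ι → κ)
    (yOv : ι → ι → Prop) (ord : ι → ℕ) (j : ι) : ℕ :=
  ((J.filter fun k => ord k < ord j ∧ σ k = σ j ∧ yOv k j)).attach.sup
    (fun k => cpPos J w σ yOv ord k.1 + w k.1)
termination_by ord j
decreasing_by
  exact (Finset.mem_filter.mp k.2).2.1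

lemma cpPos_eq {ι κ : Type*} (J : Finset ι) (w : ι → ℕ) (σ : ι → κ)
    (yOv : ι → ι → Prop) (ord : ι → ℕ) (j : ι) :
    cpPos J w σ yOv ord j =
      ((J.filter fun k => ord k < ord j ∧ σ k = σ j ∧ yOv k j)).attach.sup
        (fun k => cpPos J w σ yOv ord k.1 + w k.1) := by
  rw [cpPos]

end Aux
/-- **The LP relaxation of (P|cont|C_max) is a valid lower bound for GMSPP.**
For items with integer widths `w j ≥ 1` and heights `h j ≥ 1`, strips with
integer widths `Wd i ≥ 1` and per-unit-area costs `Cc i > 0`, such that every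
item fits on at least one strip, the infimum of `∑ i, Cc i * Wd i * Hs i` over
all fractional solutions is at most the cost of every feasible GMSPP
packing. -/
theorem lp_pc_lower_bound {ι κ : Type*} [DecidableEq ι]
    (J : Finset ι) (I : Finset κ) (w h : ι → ℕ) (Wd : κ → ℕ) (Cc : κ → ℝ)
    (hw : ∀ j ∈ J, 1 ≤ w j) (hh : ∀ j ∈ J, 1 ≤ h j)
    (hW : ∀ i ∈ I, 1 ≤ Wd i) (hCc : ∀ i ∈ I, 0 < Cc i)
    (hfit : ∀ j ∈ J, ∃ i ∈ I, w j ≤ Wd i)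
    (σ : ι → κ) (x y : ι → ℝ) (Hs : κ → ℝ)
    (hpack : IsGMSPPPacking J I (fun j => (w j : ℝ)) (fun j => (h j : ℝ))
      (fun i => (Wd i : ℝ)) Hs σ x y) :
    sInf { z : ℝ | ∃ (Hs' : κ → ℝ) (xv : κ → ι → ℕ → ℝ),
        IsFractionalSolution J I w h Wd Hs' xv ∧
        z = ∑ i ∈ I, Cc i * (Wd i : ℝ) * Hs' i }
      ≤ ∑ i ∈ I, Cc i * (Wd i : ℝ) * Hs i := by
  obtain ⟨hHs0, hσI, hcoord, hdisj⟩ := hpack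
  -- y-overlap relation
  obtain ⟨yOv, hyOv⟩ : ∃ yOv : ι → ι → Prop, yOv = fun j k =>
      ¬ Disjoint (Set.Ioo (y j) (y j + (h j : ℝ))) (Set.Ioo (y k) (y k + (h k : ℝ))) :=
    ⟨_, rfl⟩
  have hyOvsymm : ∀ j k, yOv j k → yOv k j := by
    intro j k hjk
    simp only [hyOv] at hjk ⊢
    rwa [disjoint_comm]
  -- processing order: sort by x-coordinate
  set l : List ι := J.toList.mergeSort (fun a b => decide (x a ≤ x b)) with hl
  have hmem : ∀ j ∈ J, j ∈ l := by
    intro j hj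
    rw [hl, (List.mergeSort_perm _ _).mem_iff, Finset.mem_toList]
    exact hj
  have hsort : l.Pairwise (fun a b => x a ≤ x b) := by
    have := List.pairwise_mergeSort (le := fun a b => decide (x a ≤ x b))
      (by intro a b c hab hbc; simp only [decide_eq_true_eq] at *; exact le_trans hab hbc)
      (by intro a b; simp only [Bool.or_eq_true, decide_eq_true_eq]; exact le_total _ _)
      J.toList
    rw [hl]
    exact List.Pairwise.imp (by intro a b hab; simpa using hab) this
  set ord : ι → ℕ := fun j => l.idxOf j with hordd
  have hlen : ∀ j ∈ J, ord j < l.length := fun j hj => List.idxOf_lt_length_iff.2 (hmem j hj)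
  have hmono : ∀ j ∈ J, ∀ k ∈ J, ord k < ord j → x k ≤ x j := by
    intro j hj k hk hlt
    have h1 := List.idxOf_get (hlen k hk)
    have h2 := List.idxOf_get (hlen j hj)
    have := hsort.rel_get_of_lt (a := ⟨ord k, hlen k hk⟩) (b := ⟨ord j, hlen j hj⟩)
      (by exact hlt)
    rwa [h1, h2] at this
  have hinj : ∀ j ∈ J, ∀ k ∈ J, j ≠ k → ord j ≠ ord k := by
    intro j hj k hk hne heq
    apply hne
    have h1 := List.idxOf_get (hlen j hj)
    have h2 := List.idxOf_get (hlen k hk)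
    rw [← h1, ← h2]
    congr 1
    exact Fin.ext heq
  -- geometric key lemma
  have geom : ∀ j ∈ J, ∀ k ∈ J, σ k = σ j → yOv k j → ord k < ord j →
      x k + (w k : ℝ) ≤ x j := by
    intro j hj k hk hσeq hov hlt
    have hne : k ≠ j := by rintro rfl; exact lt_irrefl _ hlt
    have hd := hdisj k hk j hj hne hσeq
    rw [hyOv] at hov
    have hBD : (Set.Ioo (y k) (y k + (h k : ℝ)) ∩ Set.Ioo (y j) (y j + (h j : ℝ))).Nonempty :=
      Set.not_disjoint_iff_nonempty_inter.mp hov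
    have hxk : x k < x k + (w k : ℝ) := by
      have : (1 : ℝ) ≤ (w k : ℝ) := by exact_mod_cast hw k hk
      linarith
    have hxj : x j < x j + (w j : ℝ) := by
      have : (1 : ℝ) ≤ (w j : ℝ) := by exact_mod_cast hw j hj
      linarith
    have hxd := disjoint_of_prod_disjoint hBD hd
    rcases Ioo_disjoint_cases hxk hxj hxd with hc | hc
    · exact hc
    · exfalso
      have hxle := hmono j hj k hk hlt
      have : (1 : ℝ) ≤ (w j : ℝ) := by exact_mod_cast hw j hj
      linarith
  -- compacted positions
  set g : ι → ℕ := cpPos J w σ yOv ord with hgdef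
  have hg_eq : ∀ j, g j =
      ((J.filter fun k => ord k < ord j ∧ σ k = σ j ∧ yOv k j)).attach.sup
        (fun k => g k.1 + w k.1) := by
    intro j
    rw [hgdef]
    exact cpPos_eq J w σ yOv ord j
  -- g j ≤ x j
  have hgxN : ∀ n, ∀ j ∈ J, ord j < n → (g j : ℝ) ≤ x j := by
    intro n
    induction n with
    | zero => intro j hj hlt; omega
    | succ n ih =>
      intro j hj hlt
      rw [hg_eq j]
      rcases Finset.eq_empty_or_nonempty
        ((J.filter fun k => ord k < ord j ∧ σ k = σ j ∧ yOv k j)).attach with hE | hNE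
      · rw [hE]
        simpa using (hcoord j hj).1
      · obtain ⟨k, _, hksup⟩ := Finset.exists_mem_eq_sup _ hNE
          (fun k => g k.1 + w k.1)
        rw [hksup]
        obtain ⟨hkJ, hklt, hkσ, hkov⟩ := Finset.mem_filter.mp k.2
        have hIH : (g k.1 : ℝ) ≤ x k.1 := ih k.1 hkJ (by omega)
        have hge := geom j hj k.1 hkJ hkσ hkov hklt
        push_cast
        linarith
  have hgx : ∀ j ∈ J, (g j : ℝ) ≤ x j := fun j hj => hgxN (ord j + 1) j hj (Nat.lt_succ_self _)
  -- g j is a sum of widths of earlier items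
  have hgnpN : ∀ n, ∀ j ∈ J, ord j < n →
      ∃ S ⊆ J, (∀ k ∈ S, ord k < ord j) ∧ g j = ∑ k ∈ S, w k := by
    intro n
    induction n with
    | zero => intro j hj hlt; omega
    | succ n ih =>
      intro j hj hlt
      rw [hg_eq j]
      rcases Finset.eq_empty_or_nonempty
        ((J.filter fun k => ord k < ord j ∧ σ k = σ j ∧ yOv k j)).attach with hE | hNE
      · refine ⟨∅, Finset.empty_subset _, by simp, by rw [hE]; simp⟩
      · obtain ⟨k, _, hksup⟩ := Finset.exists_mem_eq_sup _ hNE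
          (fun k => g k.1 + w k.1)
        rw [hksup]
        obtain ⟨hkJ, hklt, hkσ, hkov⟩ := Finset.mem_filter.mp k.2
        obtain ⟨S, hSJ, hSlt, hSsum⟩ := ih k.1 hkJ (by omega)
        have hknS : k.1 ∉ S := fun hmem => absurd (hSlt k.1 hmem) (lt_irrefl _)
        refine ⟨insert k.1 S, ?_, ?_, ?_⟩
        · intro m hm
          rcases Finset.mem_insert.mp hm with hm | hm
          · rw [hm]; exact hkJ
          · exact hSJ hm
        · intro m hm
          rcases Finset.mem_insert.mp hm with hm | hm
          · rw [hm]; exact hklt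
          · exact lt_trans (hSlt m hm) hklt
        · rw [Finset.sum_insert hknS, hSsum]
          omega
  have hgnp : ∀ j ∈ J, ∃ S ⊆ J, (∀ k ∈ S, ord k < ord j) ∧ g j = ∑ k ∈ S, w k :=
    fun j hj => hgnpN (ord j + 1) j hj (Nat.lt_succ_self _)
  -- no overlap in new positions
  have hord2 : ∀ j ∈ J, ∀ k ∈ J, σ k = σ j → yOv k j → ord k < ord j →
      g k + w k ≤ g j := by
    intro j hj k hk hσeq hov hlt
    have hkF : k ∈ (J.filter fun k' => ord k' < ord j ∧ σ k' = σ j ∧ yOv k' j) :=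
      Finset.mem_filter.mpr ⟨hk, hlt, hσeq, hov⟩
    rw [hg_eq j]
    exact Finset.le_sup (f := fun k => g k.1 + w k.1) (Finset.mem_attach _ ⟨k, hkF⟩)
  -- width fit
  have hfitg : ∀ j ∈ J, g j + w j ≤ Wd (σ j) := by
    intro j hj
    have h1 := hgx j hj
    have h2 := (hcoord j hj).2.2.1
    have : ((g j + w j : ℕ) : ℝ) ≤ ((Wd (σ j) : ℕ) : ℝ) := by push_cast; linarith
    exact_mod_cast this
  -- normal positions
  have hnp : ∀ j ∈ J, g j ∈ NormalPosNat J w (Wd (σ j)) j := by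
    intro j hj
    obtain ⟨S, hSJ, hSlt, hSsum⟩ := hgnp j hj
    refine ⟨⟨S, ?_, hSsum⟩, hfitg j hj⟩
    intro k hk
    refine Finset.mem_erase.mpr ⟨?_, hSJ hk⟩
    intro hkj
    exact absurd (hSlt k hk) (by rw [hkj]; exact lt_irrefl _)
  -- the fractional solution
  set xv : κ → ι → ℕ → ℝ := fun i j p => if σ j = i ∧ g j = p then 1 else 0 with hxv
  have hgrange : ∀ j ∈ J, g j ∈ Finset.range (Wd (σ j)) := by
    intro j hj
    rw [Finset.mem_range]
    have := hfitg j hj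
    have := hw j hj
    omega
  have hfrac : IsFractionalSolution J I w h Wd Hs xv := by
    refine ⟨hHs0, ?_, ?_, ?_, ?_⟩
    · intro i _ j _ p
      simp only [hxv]
      split <;> norm_num
    · intro i hi j hj p hne
      simp only [hxv] at hne
      split at hne
      · rename_i hc
        obtain ⟨hσi, hgp⟩ := hc
        subst hσi
        subst hgp
        exact ⟨by have := hfitg j hj; omega, hnp j hj⟩
      · exact absurd rfl hne
    · intro j hj
      rw [Finset.sum_eq_single (σ j)]
      · rw [Finset.sum_eq_single (g j)]
        · simp [hxv]
        · intro p _ hp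
          simp only [hxv]
          rw [if_neg]
          rintro ⟨-, hgp⟩
          exact hp hgp.symm
        · intro hnot
          exact absurd (hgrange j hj) hnot
      · intro i _ hi
        apply Finset.sum_eq_zero
        intro p _
        simp only [hxv]
        rw [if_neg]
        rintro ⟨hσi, -⟩
        exact hi hσi.symm
      · intro hnot
        exact absurd (hσI j hj) hnot
    · intro i hi q hq
      have hinner : ∀ j ∈ J,
          (∑ p ∈ (Finset.range (Wd i)).filter
            (fun p => p ∈ NormalPosNat J w (Wd i) j ∧ p ≤ q ∧ q < p + w j),
            (h j : ℝ) * xv i j p)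
          = if (fun j => σ j = i ∧ g j ∈ (Finset.range (Wd i)).filter
              (fun p => p ∈ NormalPosNat J w (Wd i) j ∧ p ≤ q ∧ q < p + w j)) j
            then (h j : ℝ) else 0 := by
        intro j hj
        have hterm : ∀ p, (h j : ℝ) * xv i j p
            = if σ j = i then (if g j = p then (h j : ℝ) else 0) else 0 := by
          intro p
          simp only [hxv]
          by_cases h1 : σ j = i <;> by_cases h2 : g j = p <;> simp [h1, h2]
        simp only [hterm]
        by_cases h1 : σ j = i
        · simp only [h1, if_true, true_and, Finset.sum_ite_eq]
        · simp [h1]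
      rw [Finset.sum_congr rfl hinner, ← Finset.sum_filter]
      set T := J.filter (fun j => σ j = i ∧ g j ∈ (Finset.range (Wd i)).filter
        (fun p => p ∈ NormalPosNat J w (Wd i) j ∧ p ≤ q ∧ q < p + w j)) with hT
      have hTfacts : ∀ j ∈ T, j ∈ J ∧ σ j = i ∧ g j ≤ q ∧ q < g j + w j := by
        intro j hjT
        rw [hT, Finset.mem_filter] at hjT
        obtain ⟨hjJ, hjσ, hjg⟩ := hjT
        rw [Finset.mem_filter] at hjg
        exact ⟨hjJ, hjσ, hjg.2.2.1, hjg.2.2.2⟩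
      have hpair : (↑T : Set ι).PairwiseDisjoint
          (fun j => Set.Ioo (y j) (y j + (h j : ℝ))) := by
        intro j hjT k hkT hne
        obtain ⟨hjJ, hjσ, hjq1, hjq2⟩ := hTfacts j (Finset.mem_coe.mp hjT)
        obtain ⟨hkJ, hkσ, hkq1, hkq2⟩ := hTfacts k (Finset.mem_coe.mp hkT)
        show Disjoint (Set.Ioo (y j) (y j + (h j : ℝ))) (Set.Ioo (y k) (y k + (h k : ℝ)))
        by_contra hnd
        have hov : yOv j k := by rw [hyOv]; exact hnd
        rcases lt_trichotomy (ord j) (ord k) with hlt | heq | hgt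
        · have := hord2 k hkJ j hjJ (hjσ.trans hkσ.symm) hov hlt
          omega
        · exact hinj j hjJ k hkJ hne heq
        · have := hord2 j hjJ k hkJ (hkσ.trans hjσ.symm) (hyOvsymm j k hov) hgt
          omega
      have key : ∑ j ∈ T, ((y j + (h j : ℝ)) - y j) ≤ Hs i := by
        refine sum_length_le_of_disjoint T y (fun j => y j + (h j : ℝ)) (Hs i)
          (hHs0 i hi) ?_ ?_ ?_ hpair
        · intro j hjT
          obtain ⟨hjJ, -, -, -⟩ := hTfacts j hjT
          have : (1 : ℝ) ≤ (h j : ℝ) := by exact_mod_cast hh j hjJ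
          linarith
        · intro j hjT
          obtain ⟨hjJ, -, -, -⟩ := hTfacts j hjT
          exact (hcoord j hjJ).2.1
        · intro j hjT
          obtain ⟨hjJ, hjσ, -, -⟩ := hTfacts j hjT
          have := (hcoord j hjJ).2.2.2
          dsimp only at this
          rwa [hjσ] at this
      calc ∑ j ∈ T, (h j : ℝ) = ∑ j ∈ T, ((y j + (h j : ℝ)) - y j) := by
            apply Finset.sum_congr rfl; intro j _; ring
        _ ≤ Hs i := key
  have hbdd : BddBelow { z : ℝ | ∃ (Hs' : κ → ℝ) (xv : κ → ι → ℕ → ℝ),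
      IsFractionalSolution J I w h Wd Hs' xv ∧
      z = ∑ i ∈ I, Cc i * (Wd i : ℝ) * Hs' i } := by
    refine ⟨0, ?_⟩
    rintro z ⟨Hs', xv', hf, rfl⟩
    apply Finset.sum_nonneg
    intro i hi
    exact mul_nonneg (mul_nonneg (hCc i hi).le (Nat.cast_nonneg _)) (hf.1 i hi)
  exact csInf_le hbdd ⟨Hs, xv, hfrac, rfl⟩
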